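/- Refined bound on the variance term (Lemma 6): Suppose each φ_i is L-Lipschitz and ‖x_i‖ ≤ 1 for all i, and let γ_1,…,γ_n ≥ 0. Let α, α* ∈ ℝⁿ with φ_i*(−α_i) < ∞ and φ_i*(−α*_i) < ∞ for all i. Define N(u) = #{i : γ_i < u} and, for s ∈ (0,1], G*(s) = (1/n)∑_{i=1}^n (‖x_i‖² − γ_i λ n / s)(α*_i − α_i)². Then G*(s) ≤ 4L² · N(s/(λn)) / n. -/
import Mathlib


open scoped BigOperators RealInnerProductSpace
open Finset

/-- The convex conjugate `φ*(u) = sup_z (z*u - φ z)` (as a real number; junk value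
when the supremum is not finite). -/
noncomputable def fconj (φ : ℝ → ℝ) (u : ℝ) : ℝ := ⨆ z : ℝ, (z * u - φ z)

/-- `φ*(u) < ∞`, i.e. the defining supremum of the conjugate is finite. -/
def FiniteConj (φ : ℝ → ℝ) (u : ℝ) : Prop :=
  BddAbove (Set.range fun z => z * u - φ z)

/-- `g ∈ ∂φ(a)`: `g` is a subgradient of `φ` at `a`. -/
def IsSubgrad (φ : ℝ → ℝ) (a g : ℝ) : Prop :=
  ∀ b, φ a + g * (b - a) ≤ φ b

/-- `u ∈ ∂φ*(b)`: `u` is a subgradient of the conjugate `φ*` at `b`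
(the subgradient inequality being required at all points where `φ*` is finite). -/
def ConjSubgrad (φ : ℝ → ℝ) (b u : ℝ) : Prop :=
  FiniteConj φ b ∧ ∀ v, FiniteConj φ v → fconj φ b + u * (v - b) ≤ fconj φ v

/-- Dual feasibility: `φ_i*(-α_i) < ∞` for all `i`. -/
def Feas {n : ℕ} (φ : Fin n → ℝ → ℝ) (α : Fin n → ℝ) : Prop :=
  ∀ i, FiniteConj (φ i) (-(α i))

/-- `w(α) = (1/(λ n)) ∑ι α_i x_i`. -/
noncomputable def wvec {n d : ℕ} (lam : ℝ) (x : Fin n → EuclideanSpace ℝ (Fin d))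
    (α : Fin n → ℝ) : EuclideanSpace ℝ (Fin d) :=
  (1 / (lam * (n : ℝ))) • ∑ i, α i • x i

/-- The primal objective `P(w)`. -/
noncomputable def primalObj {n d : ℕ} (lam : ℝ) (x : Fin n → EuclideanSpace ℝ (Fin d))
    (φ : Fin n → ℝ → ℝ) (w : EuclideanSpace ℝ (Fin d)) : ℝ :=
  (1 / (n : ℝ)) * ∑ i, φ i ⟪x i, w⟫ + lam / 2 * ‖w‖ ^ 2

/-- The dual objective `D(α)`. -/
noncomputable def dualObj {n d : ℕ} (lam : ℝ) (x : Fin n → EuclideanSpace ℝ (Fin d))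
    (φ : Fin n → ℝ → ℝ) (α : Fin n → ℝ) : ℝ :=
  (1 / (n : ℝ)) * ∑ i, -(fconj (φ i) (-(α i))) - lam / 2 * ‖wvec lam x α‖ ^ 2

/-- The SDCA trajectory: `α^(0) = α0`, `α^(t+1) = step α^(t) (idx t)`. -/
noncomputable def traj {n : ℕ} (step : (Fin n → ℝ) → Fin n → (Fin n → ℝ))
    (α0 : Fin n → ℝ) (idx : ℕ → Fin n) : ℕ → (Fin n → ℝ)
  | 0 => α0
  | t + 1 => step (traj step α0 idx t) (idx t)

/-- Expectation over the first `t` coordinates of a uniformly random i.i.d. index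
sequence, applied to a function `g` of the index sequence (which should depend
only on the first `t` indices). -/
noncomputable def ExpIdx {n : ℕ} (hn : 0 < n) (t : ℕ) (g : (ℕ → Fin n) → ℝ) : ℝ :=
  (∑ idx : Fin t → Fin n,
      g (fun k => if h : k < t then idx ⟨k, h⟩ else (⟨0, hn⟩ : Fin n))) / (n : ℝ) ^ t

/-- If `φ` is `L`-Lipschitz and the conjugate supremum at `u` is finite, then `|u| ≤ L`. -/
lemma abs_le_of_finiteConj {φ : ℝ → ℝ} {L u : ℝ}
    (hL : ∀ a b : ℝ, |φ a - φ b| ≤ L * |a - b|) (hfin : FiniteConj φ u) : |u| ≤ L := by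
  by_contra h
  push_neg at h
  obtain ⟨M, hM⟩ := hfin
  have hM' : ∀ z : ℝ, z * u - φ z ≤ M := fun z => hM ⟨z, rfl⟩
  have hlip : ∀ z : ℝ, φ z ≤ φ 0 + L * |z| := by
    intro z
    have := (abs_le.mp (by simpa using hL z 0)).2
    linarith
  have key : ∀ t : ℝ, 0 ≤ t → t * (|u| - L) ≤ M + φ 0 := by
    intro t ht
    rcases le_or_gt 0 u with hu | hu
    · have h1 := hM' t
      have h2 := hlip t
      rw [abs_of_nonneg ht] at h2
      rw [abs_of_nonneg hu]
      nlinarith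
    · have h1 := hM' (-t)
      have h2 := hlip (-t)
      rw [abs_neg, abs_of_nonneg ht] at h2
      rw [abs_of_neg hu]
      nlinarith
  have hpos : 0 < |u| - L := by linarith
  have h0 : 0 ≤ M + φ 0 := by simpa using key 0 le_rfl
  have ht : 0 ≤ (M + φ 0 + 1) / (|u| - L) := div_nonneg (by linarith) hpos.le
  have := key _ ht
  rw [div_mul_cancel₀ _ hpos.ne'] at this
  linarith

/-- Lemma 6 (refined variance bound): if each `φᵢ` is `L`-Lipschitz, `‖xᵢ‖ ≤ 1`,
and `γᵢ ≥ 0`, then for dual-feasible `α, α*` and `s ∈ (0,1]`,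
`G*(s) = (1/n) ∑ᵢ (‖xᵢ‖² - γᵢ λ n/s)(α*ᵢ - αᵢ)² ≤ 4L² N(s/(λn))/n`,
where `N(u) = #{i : γᵢ < u}`. -/
theorem refined_variance_bound
    (n d : ℕ) (hn : 1 ≤ n)
    (x : Fin n → EuclideanSpace ℝ (Fin d))
    (φ : Fin n → ℝ → ℝ) (hconv : ∀ i, ConvexOn ℝ Set.univ (φ i))
    (lam : ℝ) (hlam : 0 < lam)
    (L : ℝ) (hL : ∀ i, ∀ a b : ℝ, |φ i a - φ i b| ≤ L * |a - b|)
    (hx : ∀ i, ‖x i‖ ≤ 1)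
    (γs : Fin n → ℝ) (hγs : ∀ i, 0 ≤ γs i)
    (α αstar : Fin n → ℝ) (hα : Feas φ α) (hαstar : Feas φ αstar)
    (s : ℝ) (hs0 : 0 < s) (hs1 : s ≤ 1) :
    (1 / (n : ℝ)) * ∑ i, (‖x i‖ ^ 2 - γs i * lam * (n : ℝ) / s) * (αstar i - α i) ^ 2
      ≤ 4 * L ^ 2 * (Nat.card {i : Fin n // γs i < s / (lam * n)} : ℝ) / n := by
  have hnpos : (0 : ℝ) < n := by exact_mod_cast hn
  have hln : 0 < lam * n := by positivity
  have hLnn : 0 ≤ L := by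
    have := hL ⟨0, hn⟩ 0 1
    have h01 : (0:ℝ) ≤ |φ ⟨0, hn⟩ 0 - φ ⟨0, hn⟩ 1| := abs_nonneg _
    simp only [show |(0:ℝ) - 1| = 1 by norm_num, mul_one] at this
    linarith
  -- pointwise bound
  have hterm : ∀ i, (‖x i‖ ^ 2 - γs i * lam * (n : ℝ) / s) * (αstar i - α i) ^ 2
      ≤ if γs i < s / (lam * n) then 4 * L ^ 2 else 0 := by
    intro i
    have hαi : |α i| ≤ L := by
      have := abs_le_of_finiteConj (hL i) (hα i)
      rwa [abs_neg] at this
    have hαsi : |αstar i| ≤ L := by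
      have := abs_le_of_finiteConj (hL i) (hαstar i)
      rwa [abs_neg] at this
    have hsq : (αstar i - α i) ^ 2 ≤ 4 * L ^ 2 := by
      have h1 := abs_le.mp hαi
      have h2 := abs_le.mp hαsi
      nlinarith [h1.1, h1.2, h2.1, h2.2]
    have hsqnn : (0:ℝ) ≤ (αstar i - α i) ^ 2 := sq_nonneg _
    by_cases hi : γs i < s / (lam * n)
    · simp only [hi, if_true]
      have hcoef : ‖x i‖ ^ 2 - γs i * lam * (n : ℝ) / s ≤ 1 := by
        have hγi := hγs i
        have hsub : 0 ≤ γs i * lam * (n : ℝ) / s := by positivity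
        have : ‖x i‖ ^ 2 ≤ 1 := by nlinarith [hx i, norm_nonneg (x i)]
        linarith
      calc (‖x i‖ ^ 2 - γs i * lam * (n : ℝ) / s) * (αstar i - α i) ^ 2
          ≤ 1 * (αstar i - α i) ^ 2 := mul_le_mul_of_nonneg_right hcoef hsqnn
        _ = (αstar i - α i) ^ 2 := one_mul _
        _ ≤ 4 * L ^ 2 := hsq
    · simp only [hi, if_false]
      push_neg at hi
      have h1 : s / (lam * n) ≤ γs i := hi
      have hge : 1 ≤ γs i * lam * (n : ℝ) / s := by
        rw [div_le_iff₀ hln] at h1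
        rw [le_div_iff₀ hs0]
        nlinarith
      have hcoef : ‖x i‖ ^ 2 - γs i * lam * (n : ℝ) / s ≤ 0 := by
        have : ‖x i‖ ^ 2 ≤ 1 := by nlinarith [hx i, norm_nonneg (x i)]
        linarith
      exact mul_nonpos_of_nonpos_of_nonneg hcoef hsqnn
  -- sum it up
  have hcard : (Nat.card {i : Fin n // γs i < s / (lam * n)} : ℝ)
      = ((Finset.univ.filter (fun i : Fin n => γs i < s / (lam * n))).card : ℝ) := by
    rw [Nat.card_eq_fintype_card, Fintype.card_subtype]
  have hsum : ∑ i, (‖x i‖ ^ 2 - γs i * lam * (n : ℝ) / s) * (αstar i - α i) ^ 2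
      ≤ 4 * L ^ 2 * ((Finset.univ.filter (fun i : Fin n => γs i < s / (lam * n))).card : ℝ) := by
    calc ∑ i, (‖x i‖ ^ 2 - γs i * lam * (n : ℝ) / s) * (αstar i - α i) ^ 2
        ≤ ∑ i, (if γs i < s / (lam * n) then 4 * L ^ 2 else 0) :=
          Finset.sum_le_sum fun i _ => hterm i
      _ = 4 * L ^ 2 * ((Finset.univ.filter (fun i : Fin n => γs i < s / (lam * n))).card : ℝ) := by
          rw [Finset.sum_ite, Finset.sum_const, Finset.sum_const_zero]
          simp [mul_comm]
    
  rw [hcard]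
  refine le_trans (mul_le_mul_of_nonneg_left hsum (by positivity)) (le_of_eq ?_)
  ring
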